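/- Suppose ‖∇F(w_t)‖ ≤ G almost surely for all t, ‖κ‖ ≤ K, and the random matrix H_t satisfies ‖H_t‖ ≤ C almost surely. Define u_t = (κᵀ q_t) ∇F(w_t) - H_tᵀ q_t. If E[H_t | ℱ_t] = κ ∇F(w_t)ᵀ with q_t, w_t being ℱ_t-measurable, then E[u_t | ℱ_t] = 0 and E[‖u_t‖² | ℱ_t] ≤ M(1 + ‖q_t‖²) for some constant M depending only on G, K, C. -/

import Mathlib

open MeasureTheory
open scoped RealInnerProductSpace

section Aux

variable {α E F : Type*} {m : MeasurableSpace α} [m0 : MeasurableSpace α] {μ : Measure α}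
  [IsFiniteMeasure μ]
  [NormedAddCommGroup E] [NormedSpace ℝ E] [CompleteSpace E]
  [NormedAddCommGroup F] [NormedSpace ℝ F] [CompleteSpace F]

theorem stmt8_condexp_comp_clm (hm : m ≤ m0) (T : E →L[ℝ] F) {f : α → E}
    (hf : Integrable f μ) :
    condExp m μ (fun ω => T (f ω)) =ᵐ[μ] fun ω => T ((μ[f | m]) ω) := by
  have h1 : Integrable (fun ω => T (f ω)) μ := T.integrable_comp (φ := f) hf
  have h2 : Integrable (fun ω => T ((μ[f | m]) ω)) μ :=
    T.integrable_comp (φ := μ[f | m]) integrable_condExp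
  refine (ae_eq_condExp_of_forall_setIntegral_eq hm h1
    (fun s _ _ => h2.integrableOn)
    (fun s hs hμs => ?_)
    (StronglyMeasurable.aestronglyMeasurable (T.continuous.comp_stronglyMeasurable stronglyMeasurable_condExp))).symm
  calc ∫ x in s, T ((μ[f | m]) x) ∂μ
      = T (∫ x in s, (μ[f | m]) x ∂μ) :=
        ContinuousLinearMap.integral_comp_comm T integrable_condExp.integrableOn
    _ = T (∫ x in s, f x ∂μ) := by rw [setIntegral_condExp hm hf hs]
    _ = ∫ x in s, T (f x) ∂μ := (ContinuousLinearMap.integral_comp_comm T hf.integrableOn).symm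

theorem stmt8_abs_coord_le {n : ℕ} (x : EuclideanSpace ℝ (Fin n)) (i : Fin n) :
    |x i| ≤ ‖x‖ := by
  rw [EuclideanSpace.norm_eq, ← Real.sqrt_sq_eq_abs]
  apply Real.sqrt_le_sqrt
  simpa using Finset.single_le_sum (f := fun j => ‖x j‖ ^ 2)
    (fun j _ => sq_nonneg _) (Finset.mem_univ i)

/-- Pull-out property for a bounded `m`-measurable scalar factor times an integrable
Euclidean-space-valued function. -/
theorem stmt8_condexp_smul_of_bound {d : ℕ} (hm : m ≤ m0) {c : α → ℝ} {B : ℝ}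
    (hc : StronglyMeasurable[m] c) (hcB : ∀ᵐ ω ∂μ, ‖c ω‖ ≤ B)
    {g : α → EuclideanSpace ℝ (Fin d)} (hg : Integrable g μ) :
    condExp m μ (fun ω => c ω • g ω) =ᵐ[μ] fun ω => c ω • (μ[g | m]) ω := by
  have hcg : Integrable (fun ω => c ω • g ω) μ := by
    refine Integrable.mono' (hg.norm.const_mul B)
      (((hc.mono hm).aestronglyMeasurable).smul hg.1) ?_
    filter_upwards [hcB] with ω hω
    rw [norm_smul]
    exact mul_le_mul_of_nonneg_right hω (norm_nonneg _)
  have hcomp : ∀ j : Fin d,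
      (fun ω => ((μ[(fun ω => c ω • g ω) | m]) ω) j) =ᵐ[μ]
        fun ω => c ω * ((μ[g | m]) ω) j := by
    intro j
    have h1 := stmt8_condexp_comp_clm hm (EuclideanSpace.proj j) hcg
    have h2 := stmt8_condexp_comp_clm hm (EuclideanSpace.proj j) hg
    have h3 : condExp m μ (fun ω => (EuclideanSpace.proj (𝕜 := ℝ) j) (c ω • g ω))
        = condExp m μ (fun ω => c ω * g ω j) := rfl
    have h4 := condExp_stronglyMeasurable_mul_of_bound hm hc
      ((EuclideanSpace.proj (𝕜 := ℝ) j).integrable_comp (φ := g) hg) B hcB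
    have h5 : (fun ω => c ω * g ω j) = c * (fun ω => (EuclideanSpace.proj j) (g ω)) := rfl
    filter_upwards [h1, h2, h4] with ω hω1 hω2 hω4
    have : ((μ[(fun ω => c ω • g ω) | m]) ω) j = (EuclideanSpace.proj j)
        ((μ[(fun ω => c ω • g ω) | m]) ω) := rfl
    rw [this, ← hω1, h3, show (fun ω => c ω * g ω j) = c * (fun ω => (EuclideanSpace.proj j) (g ω))
      from rfl, hω4]
    simp only [Pi.mul_apply]
    rw [hω2]
    rfl
  have := (ae_all_iff (p := fun ω j => ((μ[(fun ω => c ω • g ω) | m]) ω) j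
      = c ω * ((μ[g | m]) ω) j)).2 fun j => hcomp j
  filter_upwards [this] with ω hω
  ext j
  have : (c ω • (μ[g | m]) ω) j = c ω * ((μ[g | m]) ω) j := rfl
  rw [this, ← hω j]

end Aux

/-- The noise `u = (κᵀq) ∇F(w) - Hᵀ q` is a martingale difference:
`E[u | 𝒢] = 0` and `E[‖u‖² | 𝒢] ≤ M (1 + ‖q‖²)` for a constant `M` depending only
on the bounds `G` on `‖∇F(w)‖`, `K` on `‖κ‖`, and `C` on the rows of `H`. -/
theorem stmt8 {d m : ℕ} {Ω : Type*} [m0 : MeasurableSpace Ω]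
    (μ : Measure Ω) [IsProbabilityMeasure μ]
    (𝒢 : MeasurableSpace Ω) (h𝒢 : 𝒢 ≤ m0)
    (H : Ω → Fin m → EuclideanSpace ℝ (Fin d))
    (gFw : Ω → EuclideanSpace ℝ (Fin d))  -- ω ↦ ∇F(w_t(ω))
    (q : Ω → EuclideanSpace ℝ (Fin m))
    (κ : EuclideanSpace ℝ (Fin m))
    (G K C : ℝ)
    (hG : ∀ᵐ ω ∂μ, ‖gFw ω‖ ≤ G) (hK : ‖κ‖ ≤ K)
    (hC : ∀ᵐ ω ∂μ, ∀ i, ‖H ω i‖ ≤ C)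
    (hgFmeas : StronglyMeasurable[𝒢] gFw)
    (hqmeas : StronglyMeasurable[𝒢] q)
    (hHint : ∀ i, Integrable (fun ω => H ω i) μ)
    (hH : ∀ i, μ[fun ω => H ω i | 𝒢] =ᵐ[μ] fun ω => κ i • gFw ω)
    (u : Ω → EuclideanSpace ℝ (Fin d))
    (hu : ∀ ω, u ω = ⟪κ, q ω⟫ • gFw ω - ∑ i, q ω i • H ω i) :
    (μ[u | 𝒢] =ᵐ[μ] fun _ => 0) ∧
      ∃ M : ℝ, 0 < M ∧
        μ[fun ω => ‖u ω‖ ^ 2 | 𝒢] ≤ᵐ[μ] fun ω => M * (1 + ‖q ω‖ ^ 2) := by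
  have hμne : μ ≠ 0 := IsProbabilityMeasure.ne_zero μ
  haveI : (ae μ).NeBot := ae_neBot.2 hμne
  have hG0 : 0 ≤ G := le_trans (norm_nonneg _) hG.exists.choose_spec
  have hK0 : 0 ≤ K := (norm_nonneg κ).trans hK
  have hmC0 : 0 ≤ (m : ℝ) * C := by
    rcases Nat.eq_zero_or_pos m with hm | hm
    · simp [hm]
    · obtain ⟨ω, hω⟩ := hC.exists
      have hC0 : 0 ≤ C := le_trans (norm_nonneg _) (hω ⟨0, hm⟩)
      positivity
  set B : ℝ := K * G + m * C with hB
  have hB0 : 0 ≤ B := by positivity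
  -- integrability facts
  have hgFint : Integrable gFw μ :=
    Integrable.mono' (integrable_const G) (hgFmeas.mono h𝒢).aestronglyMeasurable hG
  have hvint : ∀ i, Integrable (fun ω => κ i • gFw ω - H ω i) μ := fun i =>
    (Integrable.smul (κ i) hgFint).sub (hHint i)
  have hvcond : ∀ i, μ[fun ω => κ i • gFw ω - H ω i | 𝒢] =ᵐ[μ]
      fun _ => (0 : EuclideanSpace ℝ (Fin d)) := by
    intro i
    have h1 : μ[(fun ω => κ i • gFw ω) - (fun ω => H ω i) | 𝒢] =ᵐ[μ]
        μ[fun ω => κ i • gFw ω | 𝒢] - μ[fun ω => H ω i | 𝒢] :=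
      condExp_sub (Integrable.smul (κ i) hgFint) (hHint i) 𝒢
    have h2 : μ[(fun ω => κ i • gFw ω) | 𝒢] = fun ω => κ i • gFw ω :=
      condExp_of_stronglyMeasurable h𝒢 (hgFmeas.const_smul (κ i))
        (Integrable.smul (κ i) hgFint)
    filter_upwards [h1, hH i] with ω hω1 hω2
    have : (fun ω => κ i • gFw ω - H ω i) = (fun ω => κ i • gFw ω) - fun ω => H ω i := rfl
    rw [this, hω1, Pi.sub_apply, h2, hω2]
    simp
  -- decomposition of u
  have husum : ∀ ω, u ω = ∑ i, q ω i • (κ i • gFw ω - H ω i) := by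
    intro ω
    rw [hu ω]
    have hinner : ⟪κ, q ω⟫ = ∑ i, κ i * q ω i := by
      simp [PiLp.inner_apply, RCLike.inner_apply, conj_trivial, mul_comm]
    rw [hinner, Finset.sum_smul, ← Finset.sum_sub_distrib]
    refine Finset.sum_congr rfl fun i _ => ?_
    rw [smul_sub, smul_smul, mul_comm]
  -- the weight φ
  set φ : Ω → ℝ := fun ω => (1 + ‖q ω‖ ^ 2)⁻¹ with hφ
  have hφmeas : StronglyMeasurable[𝒢] φ := by
    have hcont : Continuous fun x : EuclideanSpace ℝ (Fin m) => (1 + ‖x‖ ^ 2)⁻¹ :=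
      (continuous_const.add (continuous_norm.pow 2)).inv₀ fun x => by simp only [Pi.add_apply, Pi.pow_apply]; positivity
    exact hcont.comp_stronglyMeasurable hqmeas
  have hφpos : ∀ ω, 0 < φ ω := fun ω => by rw [hφ]; positivity
  have hφcancel : ∀ ω, φ ω * (1 + ‖q ω‖ ^ 2) = 1 := fun ω => by
    rw [hφ]; exact inv_mul_cancel₀ (by positivity)
  have hφle : ∀ ω, φ ω ≤ 1 := fun ω => by
    nlinarith [hφcancel ω, hφpos ω, sq_nonneg ‖q ω‖]
  constructor
  · -- martingale difference property
    by_cases hui : Integrable u μ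
    · -- the scalar factors
      set c : Fin m → Ω → ℝ := fun i ω => φ ω * q ω i with hc
      have hcmeas : ∀ i, StronglyMeasurable[𝒢] (c i) := fun i =>
        hφmeas.mul ((EuclideanSpace.proj (𝕜 := ℝ) i).continuous.comp_stronglyMeasurable hqmeas)
      have hcbd : ∀ i ω, ‖c i ω‖ ≤ 1 := by
        intro i ω
        have h1 : |q ω i| ≤ ‖q ω‖ := stmt8_abs_coord_le (q ω) i
        have h2 : ‖q ω‖ ≤ 1 + ‖q ω‖ ^ 2 := by nlinarith [sq_nonneg (‖q ω‖ - 1)]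
        have := hφcancel ω
        have := hφpos ω
        rw [hc]
        simp only [Real.norm_eq_abs, abs_mul, abs_of_pos (hφpos ω)]
        nlinarith [abs_nonneg (q ω i)]
      have hcvint : ∀ i, Integrable (fun ω => c i ω • (κ i • gFw ω - H ω i)) μ := by
        intro i
        refine Integrable.mono' (hvint i).norm
          ((((hcmeas i).mono h𝒢).aestronglyMeasurable).smul (hvint i).1)
          (ae_of_all _ fun ω => ?_)
        rw [norm_smul]
        calc ‖c i ω‖ * ‖κ i • gFw ω - H ω i‖ ≤ 1 * ‖κ i • gFw ω - H ω i‖ :=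
              mul_le_mul_of_nonneg_right (hcbd i ω) (norm_nonneg _)
          _ = ‖κ i • gFw ω - H ω i‖ := one_mul _
      have hczero : ∀ i, μ[fun ω => c i ω • (κ i • gFw ω - H ω i) | 𝒢] =ᵐ[μ]
          fun _ => (0 : EuclideanSpace ℝ (Fin d)) := by
        intro i
        refine (stmt8_condexp_smul_of_bound (m0 := m0) h𝒢 (hcmeas i) (ae_of_all _ (hcbd i))
          (hvint i)).trans ?_
        filter_upwards [hvcond i] with ω hω
        simp [hω]
      have hrw : (fun ω => φ ω • u ω) =
          fun ω => ∑ i, c i ω • (κ i • gFw ω - H ω i) := by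
        funext ω
        rw [husum ω, Finset.smul_sum]
        exact Finset.sum_congr rfl fun i _ => by rw [smul_smul]
      have hsumcond : μ[(fun ω => φ ω • u ω) | 𝒢] =ᵐ[μ]
          fun _ => (0 : EuclideanSpace ℝ (Fin d)) := by
        rw [hrw]
        have hfs : (fun ω => ∑ i, c i ω • (κ i • gFw ω - H ω i)) =
            ∑ i, fun ω => c i ω • (κ i • gFw ω - H ω i) := by
          funext ω; simp
        rw [hfs]
        refine (condExp_finsetSum (fun i _ => hcvint i) 𝒢).trans ?_
        have hall := ae_all_iff.2 fun i => hczero i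
        filter_upwards [hall] with ω hω
        simp only [Finset.sum_apply]
        rw [Finset.sum_eq_zero fun i _ => hω i]
      have hpull := stmt8_condexp_smul_of_bound (m0 := m0) h𝒢 hφmeas
        (ae_of_all _ fun ω => by
          rw [Real.norm_eq_abs, abs_of_pos (hφpos ω)]; exact hφle ω) hui
      filter_upwards [hsumcond, hpull] with ω h1 h2
      have h3 : φ ω • (μ[u | 𝒢]) ω = 0 := by rw [← h2, h1]
      rcases smul_eq_zero.mp h3 with h | h
      · exact absurd h (ne_of_gt (hφpos ω))
      · exact h
    · rw [condExp_of_not_integrable hui]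
      exact ae_of_all _ fun ω => rfl
  · -- second moment bound
    refine ⟨B ^ 2 + 1, by positivity, ?_⟩
    by_cases hfi : Integrable (fun ω => ‖u ω‖ ^ 2) μ
    · have hnorm : ∀ᵐ ω ∂μ, ‖u ω‖ ≤ B * ‖q ω‖ := by
        filter_upwards [hG, hC] with ω hωG hωC
        rw [hu ω]
        have h1 : ‖⟪κ, q ω⟫ • gFw ω‖ ≤ K * ‖q ω‖ * G := by
          rw [norm_smul, Real.norm_eq_abs]
          refine mul_le_mul ?_ hωG (norm_nonneg _) (by positivity)
          calc |⟪κ, q ω⟫| ≤ ‖κ‖ * ‖q ω‖ := abs_real_inner_le_norm κ (q ω)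
            _ ≤ K * ‖q ω‖ := mul_le_mul_of_nonneg_right hK (norm_nonneg _)
        have h2 : ‖∑ i, q ω i • H ω i‖ ≤ m * (‖q ω‖ * C) := by
          calc ‖∑ i, q ω i • H ω i‖ ≤ ∑ i, ‖q ω i • H ω i‖ := norm_sum_le _ _
            _ ≤ ∑ _i : Fin m, ‖q ω‖ * C := by
                refine Finset.sum_le_sum fun i _ => ?_
                rw [norm_smul, Real.norm_eq_abs]
                exact mul_le_mul (stmt8_abs_coord_le (q ω) i) (hωC i)
                  (norm_nonneg _) (norm_nonneg _)
            _ = m * (‖q ω‖ * C) := by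
                rw [Finset.sum_const, Finset.card_univ, Fintype.card_fin, nsmul_eq_mul]
        calc ‖⟪κ, q ω⟫ • gFw ω - ∑ i, q ω i • H ω i‖
            ≤ ‖⟪κ, q ω⟫ • gFw ω‖ + ‖∑ i, q ω i • H ω i‖ := norm_sub_le _ _
          _ ≤ K * ‖q ω‖ * G + m * (‖q ω‖ * C) := add_le_add h1 h2
          _ = B * ‖q ω‖ := by rw [hB]; ring
      have hsq : ∀ᵐ ω ∂μ, φ ω * ‖u ω‖ ^ 2 ≤ B ^ 2 + 1 := by
        filter_upwards [hnorm] with ω hω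
        have h1 : ‖u ω‖ ^ 2 ≤ B ^ 2 * ‖q ω‖ ^ 2 := by
          nlinarith [norm_nonneg (u ω), norm_nonneg (q ω)]
        have h2 := hφcancel ω
        have h3 := (hφpos ω).le
        nlinarith [mul_le_mul_of_nonneg_left h1 h3, sq_nonneg B, sq_nonneg ‖q ω‖,
          mul_nonneg h3 (sq_nonneg ‖q ω‖)]
      have hmul := condExp_stronglyMeasurable_mul_of_bound h𝒢 hφmeas hfi 1
        (ae_of_all _ fun ω => by
          rw [Real.norm_eq_abs, abs_of_pos (hφpos ω)]; exact hφle ω)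
      have hintφu : Integrable (fun ω => φ ω * ‖u ω‖ ^ 2) μ := by
        refine Integrable.mono' hfi
          (((hφmeas.mono h𝒢).aestronglyMeasurable).mul hfi.1) (ae_of_all _ fun ω => ?_)
        rw [Real.norm_eq_abs, abs_mul, abs_of_pos (hφpos ω),
          abs_of_nonneg (sq_nonneg ‖u ω‖)]
        calc φ ω * ‖u ω‖ ^ 2 ≤ 1 * ‖u ω‖ ^ 2 :=
              mul_le_mul_of_nonneg_right (hφle ω) (sq_nonneg _)
          _ = ‖u ω‖ ^ 2 := one_mul _
      have hmono : μ[(fun ω => φ ω * ‖u ω‖ ^ 2) | 𝒢] ≤ᵐ[μ]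
          μ[(fun _ => B ^ 2 + 1 : Ω → ℝ) | 𝒢] :=
        condExp_mono hintφu (integrable_const _) hsq
      rw [condExp_const h𝒢] at hmono
      filter_upwards [hmul, hmono] with ω h1 h2
      have h3 : φ ω * (μ[(fun ω => ‖u ω‖ ^ 2) | 𝒢]) ω ≤ B ^ 2 + 1 := by
        have : (φ * μ[(fun ω => ‖u ω‖ ^ 2) | 𝒢]) ω = φ ω * (μ[(fun ω => ‖u ω‖ ^ 2) | 𝒢]) ω :=
          rfl
        rw [← this, ← h1]
        exact h2
      have h4 := hφcancel ω
      have h5 := hφpos ω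
      nlinarith [mul_le_mul_of_nonneg_right h3 (by positivity : (0:ℝ) ≤ 1 + ‖q ω‖ ^ 2)]
    · rw [condExp_of_not_integrable hfi]
      exact ae_of_all _ fun ω => by positivity
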